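/- ∫_{ℝ³} ((k²+1)/√((k²+1)²−1) − 1) dk/(8π³) = 1/(3π²√2), where k² = |k|². -/

import Mathlib

open MeasureTheory Real Set Filter

noncomputable def φ (y : ℝ) : ℝ := y * (y^2+1) / Real.sqrt (y^2+2) - y^2
noncomputable def Faux (r : ℝ) : ℝ := ((r^2-1) * Real.sqrt (r^2+2) - r^3)/3

lemma sqrt_pos2 (y : ℝ) : 0 < Real.sqrt (y^2+2) := Real.sqrt_pos.2 (by positivity)

lemma sq_sqrt2 (y : ℝ) : Real.sqrt (y^2+2) ^ 2 = y^2+2 := Real.sq_sqrt (by positivity)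

lemma hasDerivAt_Faux (y : ℝ) : HasDerivAt Faux (φ y) y := by
  have hs := sqrt_pos2 y
  have h1 : HasDerivAt (fun r : ℝ => r^2+2) (2*y) y := by
    simpa using ((hasDerivAt_pow 2 y).add_const 2)
  have h2 : HasDerivAt (fun r : ℝ => Real.sqrt (r^2+2)) (2*y / (2 * Real.sqrt (y^2+2))) y :=
    (Real.hasDerivAt_sqrt (by positivity)).comp y h1 |>.congr_deriv (by ring)
  have h3 : HasDerivAt (fun r : ℝ => (r^2-1) * Real.sqrt (r^2+2))
      (2*y * Real.sqrt (y^2+2) + (y^2-1) * (2*y / (2 * Real.sqrt (y^2+2)))) y := by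
    exact (((hasDerivAt_pow 2 y).sub_const 1).congr_deriv (by ring)).mul h2
  have h4 : HasDerivAt Faux
      ((2*y * Real.sqrt (y^2+2) + (y^2-1) * (2*y / (2 * Real.sqrt (y^2+2))) - 3*y^2)/3) y := by
    unfold Faux
    exact ((h3.sub ((hasDerivAt_pow 3 y).congr_deriv (by ring))).div_const 3)
  convert h4 using 1
  have hsq := sq_sqrt2 y
  unfold φ
  field_simp
  linear_combination (-2*y) * hsq

lemma phi_eq (y : ℝ) (hy : 0 ≤ y) :
    φ y = y / (Real.sqrt (y^2+2) * ((y^2+1) + y * Real.sqrt (y^2+2))) := by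
  have hs := sqrt_pos2 y
  have hsq := sq_sqrt2 y
  have hd : 0 < (y^2+1) + y * Real.sqrt (y^2+2) := by positivity
  unfold φ
  rw [div_sub' hs.ne', div_eq_div_iff hs.ne' (by positivity)]
  linear_combination (-(y^3*Real.sqrt (y^2+2))) * hsq

lemma phi_nonneg (y : ℝ) (hy : 0 ≤ y) : 0 ≤ φ y := by
  rw [phi_eq y hy]
  have hs := sqrt_pos2 y
  positivity

lemma phi_le (y : ℝ) (hy : 0 ≤ y) : φ y ≤ (1 + y^2)⁻¹ := by
  rw [phi_eq y hy]
  have hs := sqrt_pos2 y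
  have hsq := sq_sqrt2 y
  rw [inv_eq_one_div, div_le_div_iff₀ (by positivity) (by positivity)]
  have h2 : y * Real.sqrt (y^2+2)^2 = y*(y^2+2) := by rw [hsq]
  nlinarith [h2, mul_nonneg hs.le (show (0:ℝ) ≤ y^2+1 by positivity)]

lemma phi_cont : Continuous φ := by
  apply Continuous.sub
  · apply Continuous.div (by continuity) (by continuity)
    intro x; exact (sqrt_pos2 x).ne'
  · continuity

lemma phi_integrable : IntegrableOn φ (Ioi 0) := by
  refine Integrable.mono' ((integrable_inv_one_add_sq).restrict (s := Ioi 0)) ?_ ?_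
  · exact phi_cont.aestronglyMeasurable
  · filter_upwards [ae_restrict_mem measurableSet_Ioi] with y hy
    rw [Real.norm_eq_abs, abs_of_nonneg (phi_nonneg y (le_of_lt hy))]
    exact phi_le y (le_of_lt hy)

lemma Faux_tendsto : Tendsto Faux atTop (nhds 0) := by
  have hev : ∀ᶠ r in atTop, |Faux r| ≤ 1/r := by
    filter_upwards [eventually_ge_atTop 1] with r hr
    have hr0 : (0:ℝ) < r := lt_of_lt_of_le one_pos hr
    have hs := sqrt_pos2 r
    have hsq := sq_sqrt2 r
    have hD : (0:ℝ) < (r^2-1) * Real.sqrt (r^2+2) + r^3 := by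
      have : (0:ℝ) ≤ (r^2-1) := by nlinarith
      positivity
    have key : Faux r = (2 - 3*r^2) / (3 * ((r^2-1) * Real.sqrt (r^2+2) + r^3)) := by
      unfold Faux
      rw [eq_div_iff (by positivity)]
      linear_combination ((r^2-1)^2) * hsq
    rw [key, abs_div]
    have h2 : |2 - 3*r^2| ≤ 3*r^2 := by
      rw [abs_le]; constructor <;> nlinarith
    have h3 : 3*r^3 ≤ |3 * ((r^2-1) * Real.sqrt (r^2+2) + r^3)| := by
      rw [abs_of_pos (by positivity)]
      have : r ≤ Real.sqrt (r^2+2) := by nlinarith [hs, hsq]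
      nlinarith [this, hr]
    calc |2 - 3*r^2| / |3 * ((r^2-1) * Real.sqrt (r^2+2) + r^3)|
        ≤ (3*r^2) / (3*r^3) := by
          apply div_le_div₀ (by positivity) h2 (by positivity) h3
      _ = 1/r := by field_simp
  have h1 : Tendsto (fun r : ℝ => 1/r) atTop (nhds 0) := by
    simpa [one_div] using tendsto_inv_atTop_zero
  exact squeeze_zero_norm' (by simpa [Real.norm_eq_abs] using hev) h1

lemma key_integral : ∫ y in Ioi (0:ℝ), φ y = Real.sqrt 2 / 3 := by
  have h := integral_Ioi_of_hasDerivAt_of_tendsto (f := Faux) (f' := φ) (a := 0) (m := 0)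
    (hasDerivAt_Faux 0).continuousAt.continuousWithinAt (fun x _ => hasDerivAt_Faux x)
    phi_integrable Faux_tendsto
  rw [h]
  unfold Faux
  norm_num
  ring

theorem stmt_8 :
    ∫ k : EuclideanSpace ℝ (Fin 3),
        ((‖k‖ ^ 2 + 1) / Real.sqrt ((‖k‖ ^ 2 + 1) ^ 2 - 1) - 1) / (8 * π ^ 3)
      = 1 / (3 * π ^ 2 * Real.sqrt 2) := by
  have hdim : Module.finrank ℝ (EuclideanSpace ℝ (Fin 3)) = 3 := by simp
  have h := MeasureTheory.integral_fun_norm_addHaar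
    (volume : Measure (EuclideanSpace ℝ (Fin 3)))
    (fun r : ℝ => ((r ^ 2 + 1) / Real.sqrt ((r ^ 2 + 1) ^ 2 - 1) - 1) / (8 * π ^ 3))
  rw [hdim] at h
  rw [h]
  have hball : (volume (Metric.ball (0 : EuclideanSpace ℝ (Fin 3)) 1)).toReal = 4 * π / 3 := by
    rw [EuclideanSpace.volume_ball]
    have hg : Real.Gamma ((Fintype.card (Fin 3) : ℝ) / 2 + 1) = 3/4 * Real.sqrt π := by
      simp only [Fintype.card_fin]
      have : (3:ℝ)/2 + 1 = (1/2 + 1) + 1 := by norm_num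
      rw [show ((3:ℕ):ℝ)/2 + 1 = (1/2 + 1) + 1 by push_cast; norm_num,
        Real.Gamma_add_one (by norm_num), Real.Gamma_add_one (by norm_num),
        Real.Gamma_one_half_eq]
      ring
    rw [hg]
    simp only [Fintype.card_fin, ENNReal.ofReal_one, one_pow, one_mul]
    rw [ENNReal.toReal_ofReal (by positivity)]
    have hsp : Real.sqrt π ^ 3 = π * Real.sqrt π := by
      rw [pow_succ, Real.sq_sqrt pi_pos.le]
    rw [hsp]
    have h0 : Real.sqrt π ≠ 0 := by positivity
    field_simp
  have hI : ∫ y in Ioi (0:ℝ), (y:ℝ)^(3-1) • (((y^2+1)/Real.sqrt ((y^2+1)^2-1) - 1)/(8*π^3))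
      = (Real.sqrt 2/3)/(8*π^3) := by
    rw [← key_integral, ← integral_div]
    apply setIntegral_congr_fun measurableSet_Ioi
    intro y hy
    have hy0 : (0:ℝ) < y := hy
    have hs := sqrt_pos2 y
    have heq : (y^2+1)^2 - 1 = y^2*(y^2+2) := by ring
    simp only [smul_eq_mul]
    rw [heq, Real.sqrt_mul (sq_nonneg y), Real.sqrt_sq hy0.le]
    unfold φ
    have h8 : (8:ℝ)*π^3 ≠ 0 := by positivity
    field_simp
  rw [hI, measureReal_def, hball]
  have h2 : Real.sqrt 2 * Real.sqrt 2 = 2 := Real.mul_self_sqrt (by norm_num)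
  have hπ : π ≠ 0 := pi_ne_zero
  have hs2 : Real.sqrt 2 ≠ 0 := by positivity
  simp only [smul_eq_mul, nsmul_eq_mul, Nat.cast_ofNat]
  field_simp
  linear_combination 4 * h2
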